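/- Let H ∈ (0, 1/2). There is a constant C such that for all n ≥ 1, ∑_{1 ≤ j ≤ k ≤ l ≤ m ≤ n} (1+j)^{2(H-1)} (1+k)^{2(H-1)} (1+l)^{2(H-1)} (1+(m−j))^{H-1} ≤ C · n^{H}. -/

import Mathlib

open Finset

lemma stmt17_aux (H : ℝ) (hH0 : 0 < H) (hH1 : H < 1) :
    ∀ n : ℕ, 1 ≤ n →
      ∑ i ∈ Finset.Icc 1 n, (i : ℝ) ^ (H - 1) ≤ (1 + 1 / H) * (n : ℝ) ^ H := by
  intro n hn
  obtain ⟨m, rfl⟩ : ∃ m, n = m + 1 := ⟨n - 1, (Nat.succ_pred_eq_of_pos hn).symm⟩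
  have hanti : AntitoneOn (fun x : ℝ => x ^ (H - 1)) (Set.Icc (1 : ℝ) (1 + (m : ℕ))) := by
    intro x hx y hy hxy
    exact Real.rpow_le_rpow_of_nonpos (lt_of_lt_of_le one_pos hx.1) hxy (by linarith)
  have h1 := hanti.sum_le_integral
  have hint : ∫ x in (1:ℝ)..(1 + (m : ℕ)), x ^ (H - 1)
      = ((1 + (m:ℝ)) ^ H - 1) / H := by
    rw [integral_rpow (Or.inl (by linarith))]
    norm_num
  rw [hint] at h1
  have hsplit : ∑ i ∈ Finset.Icc 1 (m + 1), (i : ℝ) ^ (H - 1)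
      = (1:ℝ) + ∑ i ∈ Finset.range m, (1 + ((i + 1 : ℕ) : ℝ)) ^ (H - 1) := by
    rw [← Finset.Ico_add_one_right_eq_Icc, Finset.sum_Ico_eq_sum_range]
    simp only [Nat.add_sub_cancel]
    rw [Finset.sum_range_succ']
    have h0 : ((1 + 0 : ℕ) : ℝ) ^ (H - 1) = 1 := by norm_num
    rw [h0, add_comm]
    congr 1
    refine Finset.sum_congr rfl fun i _ => ?_
    congr 1
    push_cast
    ring
  have hone : (1:ℝ) ≤ (1 + (m:ℝ)) ^ H :=
    calc (1:ℝ) = (1:ℝ) ^ H := (Real.one_rpow H).symm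
      _ ≤ (1 + (m:ℝ)) ^ H :=
        Real.rpow_le_rpow zero_le_one (by linarith [Nat.cast_nonneg (α := ℝ) m]) hH0.le
  have hcast : ((m + 1 : ℕ) : ℝ) = 1 + (m:ℝ) := by push_cast; ring
  rw [hsplit, hcast]
  have key : ((1 + (m:ℝ)) ^ H - 1) / H ≤ (1 + (m:ℝ)) ^ H / H := by
    gcongr
    linarith
  have hexp : (1 + 1 / H) * (1 + (m:ℝ)) ^ H
      = (1 + (m:ℝ)) ^ H + (1 + (m:ℝ)) ^ H / H := by
    field_simp
  linarith [h1]

theorem stmt17 (H : ℝ) (hH : H ∈ Set.Ioo (0 : ℝ) (1/2)) :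
    ∃ C > 0, ∀ n : ℕ, 1 ≤ n →
      ∑ j ∈ Finset.Icc 1 n, ∑ k ∈ Finset.Icc j n, ∑ l ∈ Finset.Icc k n, ∑ m ∈ Finset.Icc l n,
          (1 + (j : ℝ)) ^ (2 * (H - 1)) * (1 + (k : ℝ)) ^ (2 * (H - 1))
            * (1 + (l : ℝ)) ^ (2 * (H - 1)) * (1 + ((m : ℝ) - (j : ℝ))) ^ (H - 1)
        ≤ C * (n : ℝ) ^ H := by
  obtain ⟨hH0, hH2⟩ := hH
  have hH1 : H < 1 := by linarith
  set q : ℝ := 2 * (H - 1) with hq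
  set a : ℕ → ℝ := fun i => (1 + (i : ℝ)) ^ q with ha
  have ha0 : ∀ i, 0 ≤ a i := fun i =>
    Real.rpow_nonneg (by positivity) q
  have hsum : Summable a := by
    have h1 : Summable (fun j : ℕ => ((j:ℝ)) ^ q) :=
      Real.summable_nat_rpow.mpr (by rw [hq]; linarith)
    have h2 := (summable_nat_add_iff 1).mpr h1
    apply h2.congr
    intro i
    simp [ha]
    norm_num [add_comm]
  set S : ℝ := ∑' i, a i with hS
  have hS1 : (1:ℝ) ≤ S := by
    have := Summable.le_tsum hsum 0 (fun i _ => ha0 i)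
    simpa [ha] using this
  have hpart : ∀ s : Finset ℕ, ∑ i ∈ s, a i ≤ S :=
    fun s => Summable.sum_le_tsum s (fun i _ => ha0 i) hsum
  set B : ℝ := 1 + 1 / H with hB
  have hBpos : 0 < B := by positivity
  refine ⟨S * S * S * B, by positivity, fun n hn => ?_⟩
  set P : ℝ := B * (n : ℝ) ^ H with hP
  have hPpos : 0 ≤ P := by positivity
  have hM : ∀ j l : ℕ, 1 ≤ j → j ≤ l →
      ∑ m ∈ Finset.Icc l n, (1 + ((m : ℝ) - (j : ℝ))) ^ (H - 1) ≤ P := by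
    intro j l hj hjl
    have hinj : Set.InjOn (fun m => m - j + 1) (Finset.Icc l n : Set ℕ) := by
      intro x hx y hy hxy
      simp only [Finset.coe_Icc, Set.mem_Icc] at hx hy
      have hxy' : x - j + 1 = y - j + 1 := hxy
      omega
    calc ∑ m ∈ Finset.Icc l n, (1 + ((m : ℝ) - (j : ℝ))) ^ (H - 1)
        = ∑ m ∈ Finset.Icc l n, (((m - j + 1 : ℕ) : ℝ)) ^ (H - 1) := by
          refine Finset.sum_congr rfl fun m hm => ?_
          simp only [Finset.mem_Icc] at hm
          have : j ≤ m := le_trans hjl hm.1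
          congr 1
          push_cast [Nat.cast_sub this]
          ring
      _ = ∑ i ∈ (Finset.Icc l n).image (fun m => m - j + 1), ((i : ℕ) : ℝ) ^ (H - 1) := by
          rw [Finset.sum_image (fun x hx y hy h =>
            hinj (Finset.mem_coe.mpr hx) (Finset.mem_coe.mpr hy) h)]
      _ ≤ ∑ i ∈ Finset.Icc 1 n, ((i : ℕ) : ℝ) ^ (H - 1) := by
          apply Finset.sum_le_sum_of_subset_of_nonneg
          · intro i hi
            simp only [Finset.mem_image, Finset.mem_Icc] at hi ⊢
            obtain ⟨m, ⟨hlm, hmn⟩, rfl⟩ := hi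
            omega
          · intro i _ _
            exact Real.rpow_nonneg (Nat.cast_nonneg i) _
      _ ≤ (1 + 1 / H) * (n : ℝ) ^ H := stmt17_aux H hH0 hH1 n hn
      _ = P := rfl
  calc ∑ j ∈ Finset.Icc 1 n, ∑ k ∈ Finset.Icc j n, ∑ l ∈ Finset.Icc k n, ∑ m ∈ Finset.Icc l n,
          (1 + (j : ℝ)) ^ q * (1 + (k : ℝ)) ^ q * (1 + (l : ℝ)) ^ q
            * (1 + ((m : ℝ) - (j : ℝ))) ^ (H - 1)
      ≤ ∑ j ∈ Finset.Icc 1 n, ∑ k ∈ Finset.Icc j n, ∑ l ∈ Finset.Icc k n,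
          a j * a k * a l * P := by
        refine Finset.sum_le_sum fun j hj => Finset.sum_le_sum fun k hk =>
          Finset.sum_le_sum fun l hl => ?_
        simp only [Finset.mem_Icc] at hj hk hl
        have : ∑ m ∈ Finset.Icc l n,
            (1 + (j : ℝ)) ^ q * (1 + (k : ℝ)) ^ q * (1 + (l : ℝ)) ^ q
              * (1 + ((m : ℝ) - (j : ℝ))) ^ (H - 1)
            = (a j * a k * a l) * ∑ m ∈ Finset.Icc l n,
                (1 + ((m : ℝ) - (j : ℝ))) ^ (H - 1) := by
          rw [Finset.mul_sum]
        rw [this]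
        exact mul_le_mul_of_nonneg_left
          (hM j l hj.1 (le_trans hk.1 hl.1))
          (by positivity)
    _ ≤ ∑ j ∈ Finset.Icc 1 n, ∑ k ∈ Finset.Icc j n, a j * a k * P * S := by
        refine Finset.sum_le_sum fun j _ => Finset.sum_le_sum fun k _ => ?_
        have : ∑ l ∈ Finset.Icc k n, a j * a k * a l * P
            = (a j * a k * P) * ∑ l ∈ Finset.Icc k n, a l := by
          rw [Finset.mul_sum]; exact Finset.sum_congr rfl fun l _ => by ring
        rw [this]
        exact mul_le_mul_of_nonneg_left (hpart _) (by positivity)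
    _ ≤ ∑ j ∈ Finset.Icc 1 n, a j * P * S * S := by
        refine Finset.sum_le_sum fun j _ => ?_
        have : ∑ k ∈ Finset.Icc j n, a j * a k * P * S
            = (a j * P * S) * ∑ k ∈ Finset.Icc j n, a k := by
          rw [Finset.mul_sum]; exact Finset.sum_congr rfl fun k _ => by ring
        rw [this]
        refine mul_le_mul_of_nonneg_left (hpart _) ?_
        have := ha0 j
        have : (0:ℝ) ≤ S := le_trans zero_le_one hS1
        positivity
    _ = (∑ j ∈ Finset.Icc 1 n, a j) * (P * S * S) := by
        rw [Finset.sum_mul]; exact Finset.sum_congr rfl fun j _ => by ring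
    _ ≤ S * (P * S * S) := by
        refine mul_le_mul_of_nonneg_right (hpart _) ?_
        have hS0 : (0:ℝ) ≤ S := le_trans zero_le_one hS1
        positivity
    _ = S * S * S * B * (n : ℝ) ^ H := by rw [hP]; ring
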